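/- Let X₁ = !![1, 0; 0, −1] and X₂ = !![0, 1; 0, 0] as 2×2 complex matrices, and let α, β ∈ ℂ with exp(−2α) ≠ 1. Then exp(α • X₁ + (2αβ/(1 − exp(−2α))) • X₂) = exp(α • X₁) * exp(β • X₂); i.e., log(e^{αX₁} e^{βX₂}) = αX₁ + (2αβ/(1 − e^{−2α})) X₂. -/

import Mathlib

open Matrix

lemma exp_of_sq_eq_zero (A : Matrix (Fin 2) (Fin 2) ℂ) (hA : A * A = 0) :
    NormedSpace.exp A = 1 + A := by
  rw [NormedSpace.exp_eq_tsum (𝕂 := ℂ)]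
  have hpow : ∀ n : ℕ, 2 ≤ n → A ^ n = 0 := by
    intro n hn
    obtain ⟨m, rfl⟩ := Nat.exists_eq_add_of_le hn
    rw [pow_add, pow_two, hA, zero_mul]
  have hz : ∀ n ∉ Finset.range 2, ((n.factorial : ℂ))⁻¹ • A ^ n = 0 := by
    intro n hn
    rw [hpow n (by simp [Finset.mem_range] at hn; omega), smul_zero]
  beta_reduce
  rw [tsum_eq_sum hz]
  simp [Finset.sum_range_succ]

theorem log_exp_mul_exp (α β : ℂ) (h : Complex.exp (-(2 * α)) ≠ 1) :
    NormedSpace.exp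
        (α • (!![1, 0; 0, -1] : Matrix (Fin 2) (Fin 2) ℂ) +
          (2 * α * β / (1 - Complex.exp (-(2 * α)))) •
            (!![0, 1; 0, 0] : Matrix (Fin 2) (Fin 2) ℂ)) =
      NormedSpace.exp (α • (!![1, 0; 0, -1] : Matrix (Fin 2) (Fin 2) ℂ)) *
        NormedSpace.exp (β • (!![0, 1; 0, 0] : Matrix (Fin 2) (Fin 2) ℂ)) := by
  have h1 : (1 : ℂ) - Complex.exp (-(2 * α)) ≠ 0 := sub_ne_zero.mpr (Ne.symm h)
  set u := Complex.exp (-(2 * α)) with hu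
  set t : ℂ := -β / (1 - u) with ht
  set P : Matrix (Fin 2) (Fin 2) ℂ := !![1, t; 0, 1] with hP
  have hPdet : IsUnit P.det := by
    simp [hP, Matrix.det_fin_two_of]
  have hPunit : IsUnit P := (Matrix.isUnit_iff_isUnit_det _).mpr hPdet
  have hPinv : P⁻¹ = !![1, -t; 0, 1] := by
    apply Matrix.inv_eq_right_inv
    simp [hP, Matrix.mul_fin_two]
    exact Matrix.one_fin_two.symm
  -- conjugation identity
  have key : Complex.exp α * u = Complex.exp (-α) := by
    rw [hu, ← Complex.exp_add]; ring_nf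
  have hexpne : Complex.exp α ≠ 0 := Complex.exp_ne_zero α
  have eq1 : α • (!![1, 0; 0, -1] : Matrix (Fin 2) (Fin 2) ℂ) +
      (2 * α * β / (1 - u)) • (!![0, 1; 0, 0] : Matrix (Fin 2) (Fin 2) ℂ) =
      P * (α • (!![1, 0; 0, -1] : Matrix (Fin 2) (Fin 2) ℂ)) * P⁻¹ := by
    rw [hPinv]
    ext i j
    fin_cases i <;> fin_cases j <;>
      simp [hP, Matrix.mul_apply, Fin.sum_univ_two, ht] <;>
      field_simp <;> ring
  have hdiag : α • (!![1, 0; 0, -1] : Matrix (Fin 2) (Fin 2) ℂ) =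
      Matrix.diagonal ![α, -α] := by
    ext i j
    fin_cases i <;> fin_cases j <;> simp [Matrix.diagonal]
  have hexp1 : NormedSpace.exp (α • (!![1, 0; 0, -1] : Matrix (Fin 2) (Fin 2) ℂ)) =
      (!![Complex.exp α, 0; 0, Complex.exp (-α)] : Matrix (Fin 2) (Fin 2) ℂ) := by
    rw [hdiag, Matrix.exp_diagonal]
    have : NormedSpace.exp ![α, -α] = ![Complex.exp α, Complex.exp (-α)] := by
      funext i
      fin_cases i <;> simp [← Complex.exp_eq_exp_ℂ]
    rw [this]
    ext i j
    fin_cases i <;> fin_cases j <;> simp [Matrix.diagonal]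
  have hexp2 : NormedSpace.exp (β • (!![0, 1; 0, 0] : Matrix (Fin 2) (Fin 2) ℂ)) =
      1 + β • (!![0, 1; 0, 0] : Matrix (Fin 2) (Fin 2) ℂ) := by
    apply exp_of_sq_eq_zero
    ext i j
    fin_cases i <;> fin_cases j <;> simp [Matrix.mul_apply, Fin.sum_univ_two]
  rw [eq1, Matrix.exp_conj P _ hPunit, hexp1, hexp2, hPinv]
  ext i j
  fin_cases i <;> fin_cases j <;>
    simp [hP, Matrix.mul_apply, Fin.sum_univ_two, Matrix.one_apply, ht] <;>
    field_simp <;> linear_combination β * key
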